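/- Let μ and ν be locally finite measures on a separable metric space Ω with μ ≪ ν. Any two versions of dμ/dν that are continuous on the support S_μ of μ coincide on S_μ. -/

import Mathlib

open MeasureTheory
open scoped ENNReal

/-- The support of a measure: the set of points all of whose open
neighbourhoods have positive measure. -/
def measureSupport {Ω : Type*} [TopologicalSpace Ω] [MeasurableSpace Ω]
    (ν : Measure Ω) : Set Ω :=
  {ω | ∀ U : Set Ω, IsOpen U → ω ∈ U → 0 < ν U}

lemma measure_compl_measureSupport {Ω : Type*} [MetricSpace Ω]
    [TopologicalSpace.SeparableSpace Ω] [MeasurableSpace Ω]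
    (μ : Measure Ω) : μ (measureSupport μ)ᶜ = 0 := by
  haveI := UniformSpace.secondCountable_of_separable Ω
  apply measure_null_of_locally_null
  intro x hx
  simp only [measureSupport, Set.mem_compl_iff, Set.mem_setOf_eq, not_forall] at hx
  obtain ⟨U, hU, hxU, hU0⟩ := hx
  refine ⟨U, ?_, by simpa using hU0⟩
  exact Filter.mem_of_superset (nhdsWithin_le_nhds (hU.mem_nhds hxU)) subset_rfl

/-- For locally finite measures `μ ≪ ν` on a separable metric space, any two
versions of `dμ/dν` that are continuous on the support of `μ` coincide there. -/
theorem continuousOn_rnDeriv_unique {Ω : Type*} [MetricSpace Ω]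
    [TopologicalSpace.SeparableSpace Ω] [MeasurableSpace Ω] [BorelSpace Ω]
    (μ ν : Measure Ω) [IsLocallyFiniteMeasure μ] [IsLocallyFiniteMeasure ν]
    (hac : μ ≪ ν)
    (f g : Ω → ℝ≥0∞)
    (hf : ContinuousOn f (measureSupport μ)) (hg : ContinuousOn g (measureSupport μ))
    (hfv : f =ᵐ[ν] μ.rnDeriv ν) (hgv : g =ᵐ[ν] μ.rnDeriv ν) :
    Set.EqOn f g (measureSupport μ) := by
  have hfg : f =ᵐ[ν] g := hfv.trans hgv.symm
  have hfgμ : f =ᵐ[μ] g := hac hfg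
  intro ω hω
  by_contra hne
  -- set where f ≠ g is relatively open in the support
  have hcont : ContinuousWithinAt (fun x => (f x, g x)) (measureSupport μ) ω :=
    (hf ω hω).prodMk (hg ω hω)
  have hopen : IsOpen {p : ℝ≥0∞ × ℝ≥0∞ | p.1 ≠ p.2} := isOpen_ne_fun continuous_fst continuous_snd
  have hmem : {p : ℝ≥0∞ × ℝ≥0∞ | p.1 ≠ p.2} ∈ nhds (f ω, g ω) := hopen.mem_nhds hne
  have h2 : (fun x => (f x, g x)) ⁻¹' {p : ℝ≥0∞ × ℝ≥0∞ | p.1 ≠ p.2} ∈ nhdsWithin ω (measureSupport μ) := hcont hmem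
  rw [mem_nhdsWithin] at h2
  obtain ⟨U, hUopen, hωU, hUsub⟩ := h2
  have hpos : 0 < μ U := hω U hUopen hωU
  have hUne : U ∩ measureSupport μ ⊆ {x | f x ≠ g x} := fun x hx => hUsub hx
  have hμne : μ {x | f x ≠ g x} = 0 := hfgμ
  have : μ U ≤ μ (U ∩ measureSupport μ) + μ (measureSupport μ)ᶜ := by
    refine (measure_mono ?_).trans (measure_union_le _ _)
    intro x hx
    by_cases h : x ∈ measureSupport μ
    · exact Or.inl ⟨hx, h⟩
    · exact Or.inr h
  rw [measure_compl_measureSupport, add_zero] at this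
  have : μ U = 0 := le_antisymm (this.trans ((measure_mono hUne).trans hμne.le)) zero_le
  exact hpos.ne' this
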